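/- It holds that cl(conv(P^B ∖ C)) = cl(conv(P^B ∖ T^C)) = cl(conv(P^B ∖ R^C)). -/

import Mathlib

open Set Pointwise

noncomputable section

variable {n : ℕ} {ι : Type*} [Fintype ι]

/-- Recession cone of a set `A`. -/
def recc (A : Set (Fin n → ℝ)) : Set (Fin n → ℝ) :=
  {d | ∀ a ∈ A, ∀ t : ℝ, 0 ≤ t → a + t • d ∈ A}

/-- The translated simplicial cone `P^B = {x̄ + Σ_j x_j r^j : x_j ≥ 0}`. -/
def PBset (xb : Fin n → ℝ) (r : ι → Fin n → ℝ) : Set (Fin n → ℝ) :=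
  {x | ∃ c : ι → ℝ, (∀ j, 0 ≤ c j) ∧ x = xb + ∑ j, c j • r j}

/-- The recession cone of `P^B`, i.e. `{Σ_j t_j r^j : t_j ≥ 0}`. -/
def reccPBset (r : ι → Fin n → ℝ) : Set (Fin n → ℝ) :=
  {x | ∃ t : ι → ℝ, (∀ j, 0 ≤ t j) ∧ x = ∑ j, t j • r j}

/-- `λ⁻ = inf {λ ≥ 0 : x̄ + λ d ∈ C}` (`+∞` if the halfline misses `C`). -/
noncomputable def lamM (xb d : Fin n → ℝ) (C : Set (Fin n → ℝ)) : EReal :=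
  sInf ((fun l : ℝ => (l : EReal)) '' {l : ℝ | 0 ≤ l ∧ xb + l • d ∈ C})

/-- `λ⁺ = sup {λ ≥ 0 : x̄ + λ d ∈ C}` (`−∞` if the halfline misses `C`). -/
noncomputable def lamP (xb d : Fin n → ℝ) (C : Set (Fin n → ℝ)) : EReal :=
  sSup ((fun l : ℝ => (l : EReal)) '' {l : ℝ | 0 ≤ l ∧ xb + l • d ∈ C})

/-- `N₀`: indices whose halfline misses `C`. -/
def N0set (xb : Fin n → ℝ) (r : ι → Fin n → ℝ) (C : Set (Fin n → ℝ)) : Set ι :=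
  {j | ∀ l : ℝ, 0 ≤ l → xb + l • r j ∉ C}

/-- `N₁`: indices with `0 < λ⁻ < +∞` and `λ⁺ = +∞`. -/
def N1set (xb : Fin n → ℝ) (r : ι → Fin n → ℝ) (C : Set (Fin n → ℝ)) : Set ι :=
  {j | 0 < lamM xb (r j) C ∧ lamM xb (r j) C < ⊤ ∧ lamP xb (r j) C = ⊤}

/-- `N₂`: indices with `0 < λ⁻ < +∞` and `λ⁻ < λ⁺ < +∞`. -/
def N2set (xb : Fin n → ℝ) (r : ι → Fin n → ℝ) (C : Set (Fin n → ℝ)) : Set ι :=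
  {j | 0 < lamM xb (r j) C ∧ lamM xb (r j) C < ⊤ ∧
    lamM xb (r j) C < lamP xb (r j) C ∧ lamP xb (r j) C < ⊤}

/-- `T = {x̄} + conv(⋃_{j∈N₁∪N₂} {λ r^j : λ⁻_j < λ < λ⁺_j})`. -/
def Tset (xb : Fin n → ℝ) (r : ι → Fin n → ℝ) (C : Set (Fin n → ℝ)) : Set (Fin n → ℝ) :=
  {xb} + convexHull ℝ (⋃ j ∈ N1set xb r C ∪ N2set xb r C,
    {y : Fin n → ℝ | ∃ l : ℝ, lamM xb (r j) C < (l : EReal) ∧ (l : EReal) < lamP xb (r j) C ∧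
      y = l • r j})

/-- `T^C = T + recc(C)`. -/
def TCset (xb : Fin n → ℝ) (r : ι → Fin n → ℝ) (C : Set (Fin n → ℝ)) : Set (Fin n → ℝ) :=
  Tset xb r C + recc C

/-- `R = {x̄} + conv(⋃_{j∈N₁} {λ r^j : λ > λ⁻_j})`. -/
def Rset (xb : Fin n → ℝ) (r : ι → Fin n → ℝ) (C : Set (Fin n → ℝ)) : Set (Fin n → ℝ) :=
  {xb} + convexHull ℝ (⋃ j ∈ N1set xb r C,
    {y : Fin n → ℝ | ∃ l : ℝ, lamM xb (r j) C < (l : EReal) ∧ y = l • r j})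

/-- `R^C = R + recc(C)`. -/
def RCset (xb : Fin n → ℝ) (r : ι → Fin n → ℝ) (C : Set (Fin n → ℝ)) : Set (Fin n → ℝ) :=
  Rset xb r C + recc C

/-! ### Auxiliary lemmas -/

section Aux

variable {xb d : Fin n → ℝ} {C : Set (Fin n → ℝ)}

lemma lamM_le {l : ℝ} (h0 : 0 ≤ l) (hc : xb + l • d ∈ C) : lamM xb d C ≤ (l : EReal) :=
  sInf_le (Set.mem_image_of_mem _ ⟨h0, hc⟩)

lemma le_lamP {l : ℝ} (h0 : 0 ≤ l) (hc : xb + l • d ∈ C) : (l : EReal) ≤ lamP xb d C :=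
  le_sSup (Set.mem_image_of_mem _ ⟨h0, hc⟩)

lemma mem_of_between (hCconv : Convex ℝ C) {l : ℝ}
    (h1 : lamM xb d C < (l : EReal)) (h2 : (l : EReal) < lamP xb d C) :
    xb + l • d ∈ C := by
  obtain ⟨a, ⟨l1, ⟨hl10, hl1C⟩, rfl⟩, hal⟩ := sInf_lt_iff.mp h1
  obtain ⟨b, ⟨l2, ⟨hl20, hl2C⟩, rfl⟩, hbl⟩ := lt_sSup_iff.mp h2
  have hl1 : l1 < l := by
    have : (l1 : EReal) < (l : EReal) := by simpa using hal
    exact_mod_cast this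
  have hl2 : l < l2 := by
    have : (l : EReal) < (l2 : EReal) := by simpa using hbl
    exact_mod_cast this
  have h21 : 0 < l2 - l1 := by linarith
  set t : ℝ := (l - l1) / (l2 - l1) with ht
  have ht0 : 0 ≤ t := div_nonneg (by linarith) h21.le
  have ht1 : 0 ≤ 1 - t := by
    rw [sub_nonneg, ht, div_le_one h21]; linarith
  have hteq : t * (l2 - l1) = l - l1 := by
    rw [ht]; field_simp
  have hmem := hCconv hl1C hl2C ht1 ht0 (by ring)
  convert hmem using 1
  funext i
  simp only [Pi.add_apply, Pi.smul_apply, smul_eq_mul]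
  linear_combination (-d i) * hteq

lemma mem_recc_of_ray (hCopen : IsOpen C) (hCconv : Convex ℝ C) {x : Fin n → ℝ}
    (hx : x ∈ C) (h : ∀ t : ℝ, 0 ≤ t → x + t • d ∈ C) : d ∈ recc C := by
  have hcl : ∀ t : ℝ, 0 ≤ t → ∀ a ∈ C, a + t • d ∈ closure C := by
    intro t ht a ha
    have key : Filter.Tendsto (fun θ : ℝ => (1 - θ) • a + θ • x + t • d)
        (nhdsWithin 0 (Set.Ioi 0)) (nhds (a + t • d)) := by
      have hco : Continuous (fun θ : ℝ => (1 - θ) • a + θ • x + t • d) := by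
        continuity
      have h2 := (hco.tendsto 0).mono_left
        (nhdsWithin_le_nhds (s := Set.Ioi (0 : ℝ)))
      simpa using h2
    apply mem_closure_of_tendsto key
    have hIoo : Set.Ioo (0:ℝ) 1 ∈ nhdsWithin (0:ℝ) (Set.Ioi 0) :=
      Ioo_mem_nhdsGT_of_mem ⟨le_refl 0, zero_lt_one⟩
    apply Filter.eventually_of_mem hIoo
    intro θ hθ
    have hmem := hCconv ha (h (t / θ) (div_nonneg ht hθ.1.le))
      (by linarith [hθ.2] : (0:ℝ) ≤ 1 - θ) hθ.1.le (by ring)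
    convert hmem using 1
    funext i
    simp only [Pi.add_apply, Pi.smul_apply, smul_eq_mul]
    field_simp [hθ.1.ne']
    ring
  intro a ha t ht
  have h2 : a + (2 * t) • d ∈ closure C := hcl (2 * t) (by linarith) a ha
  have h3 := hCconv.combo_interior_closure_mem_interior
    (by rwa [hCopen.interior_eq] : a ∈ interior C) h2
    (by norm_num : (0:ℝ) < 1/2) (by norm_num : (0:ℝ) ≤ 1/2) (by norm_num)
  rw [hCopen.interior_eq] at h3
  convert h3 using 1
  funext i
  simp only [Pi.add_apply, Pi.smul_apply, smul_eq_mul]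
  ring

lemma not_mem_of_lamP_lt {l : ℝ} (h0 : 0 ≤ l) (h : lamP xb d C < (l : EReal)) :
    xb + l • d ∉ C :=
  fun hc => absurd (le_lamP h0 hc) (not_le.mpr h)

lemma lamM_boundary_not_mem (hCopen : IsOpen C) {lm : ℝ}
    (hlm : lamM xb d C = (lm : EReal)) (hpos : 0 < lm) : xb + lm • d ∉ C := by
  intro hc
  have hopen : IsOpen {t : ℝ | xb + t • d ∈ C} := by
    apply hCopen.preimage (f := fun t : ℝ => xb + t • d)
    continuity
  obtain ⟨ε, hε, hball⟩ := Metric.isOpen_iff.mp hopen lm hc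
  set l := lm - min (ε / 2) (lm / 2) with hl
  have hm1 := min_le_left (ε / 2) (lm / 2)
  have hm2 := min_le_right (ε / 2) (lm / 2)
  have hminpos : 0 < min (ε / 2) (lm / 2) := lt_min (by linarith) (by linarith)
  have hl0 : 0 ≤ l := by simp only [hl]; linarith
  have hlC : xb + l • d ∈ C := by
    apply hball
    rw [Metric.mem_ball, Real.dist_eq, hl]
    rw [abs_of_nonpos (by linarith)]
    linarith
  have hle : lamM xb d C ≤ (l : EReal) := lamM_le hl0 hlC
  rw [hlm] at hle
  have h1 : lm ≤ l := by exact_mod_cast hle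
  have h2 : l < lm := by simp only [hl]; linarith
  linarith

lemma partition_cases (hCopen : IsOpen C) (hxb : xb ∉ closure C) (hd : d ≠ 0) :
    (∀ l : ℝ, 0 ≤ l → xb + l • d ∉ C) ∨
    (0 < lamM xb d C ∧ lamM xb d C < ⊤ ∧ lamP xb d C = ⊤) ∨
    (0 < lamM xb d C ∧ lamM xb d C < ⊤ ∧ lamM xb d C < lamP xb d C ∧
      lamP xb d C < ⊤) := by
  by_cases hS : ∀ l : ℝ, 0 ≤ l → xb + l • d ∉ C
  · exact Or.inl hS
  push_neg at hS
  obtain ⟨l0, hl00, hl0C⟩ := hS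
  have hxb' : ∃ ε > 0, ∀ y ∈ C, ε ≤ dist xb y := by
    by_contra hcon
    push_neg at hcon
    apply hxb
    rw [Metric.mem_closure_iff]
    intro ε hε
    obtain ⟨y, hy, hdy⟩ := hcon ε hε
    exact ⟨y, hy, hdy⟩
  obtain ⟨ε, hε, hfar⟩ := hxb'
  have hdn : 0 < ‖d‖ := norm_pos_iff.mpr hd
  have hlow : ∀ l : ℝ, 0 ≤ l → xb + l • d ∈ C → ε / ‖d‖ ≤ l := by
    intro l hl hC
    have h1 := hfar _ hC
    rw [dist_eq_norm] at h1
    have h2 : ε ≤ l * ‖d‖ := by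
      calc ε ≤ ‖xb - (xb + l • d)‖ := h1
      _ = ‖l • d‖ := by rw [show xb - (xb + l • d) = -(l • d) by abel, norm_neg]
      _ = l * ‖d‖ := by rw [norm_smul, Real.norm_eq_abs, abs_of_nonneg hl]
    rw [div_le_iff₀ hdn]; linarith
  have hMpos : 0 < lamM xb d C := by
    have h1 : ((ε / ‖d‖ : ℝ) : EReal) ≤ lamM xb d C := by
      apply le_sInf
      rintro a ⟨l, ⟨hl0, hlC⟩, rfl⟩
      show ((ε / ‖d‖ : ℝ) : EReal) ≤ (l : EReal)
      exact_mod_cast hlow l hl0 hlC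
    have h2 : (0 : EReal) < ((ε / ‖d‖ : ℝ) : EReal) := by
      exact_mod_cast div_pos hε hdn
    exact lt_of_lt_of_le h2 h1
  have hMtop : lamM xb d C < ⊤ :=
    lt_of_le_of_lt (lamM_le hl00 hl0C) (EReal.coe_lt_top l0)
  have hopen : IsOpen {t : ℝ | xb + t • d ∈ C} := by
    apply hCopen.preimage (f := fun t : ℝ => xb + t • d)
    continuity
  obtain ⟨δ, hδ, hball⟩ := Metric.isOpen_iff.mp hopen l0 hl0C
  have hεd := div_pos hε hdn
  have hl0pos : 0 < l0 := lt_of_lt_of_le hεd (hlow _ hl00 hl0C)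
  set δ' := min (δ / 2) (l0 / 2) with hδ'
  have hd1 := min_le_left (δ / 2) (l0 / 2)
  have hd2 := min_le_right (δ / 2) (l0 / 2)
  have hδ'pos : 0 < δ' := lt_min (by linarith) (by linarith)
  have hmem1 : xb + (l0 - δ') • d ∈ C := by
    apply hball
    rw [Metric.mem_ball, Real.dist_eq, abs_of_nonpos (by linarith)]
    linarith
  have hmem2 : xb + (l0 + δ') • d ∈ C := by
    apply hball
    rw [Metric.mem_ball, Real.dist_eq, abs_of_nonneg (by linarith)]
    linarith
  have hMP : lamM xb d C < lamP xb d C := by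
    calc lamM xb d C ≤ ((l0 - δ' : ℝ) : EReal) := lamM_le (by linarith) hmem1
    _ < ((l0 + δ' : ℝ) : EReal) := by exact_mod_cast (by linarith : l0 - δ' < l0 + δ')
    _ ≤ lamP xb d C := le_lamP (by linarith) hmem2
  rcases eq_or_lt_of_le (le_top : lamP xb d C ≤ ⊤) with htop | hlt
  · exact Or.inr (Or.inl ⟨hMpos, hMtop, htop⟩)
  · exact Or.inr (Or.inr ⟨hMpos, hMtop, hMP, hlt⟩)

lemma single_mem_PB (xb : Fin n → ℝ) (r : ι → Fin n → ℝ) {l : ℝ} (hl : 0 ≤ l) (j : ι) :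
    xb + l • r j ∈ PBset xb r := by
  classical
  refine ⟨fun k => if k = j then l else 0, fun k => ?_, ?_⟩
  · by_cases h : k = j <;> simp [h, hl]
  · congr 1
    rw [show (∑ k, (if k = j then l else 0) • r k) = l • r j from by simp [ite_smul]]

lemma TC_subset_C (xb : Fin n → ℝ) (r : ι → Fin n → ℝ) (hCconv : Convex ℝ C) :
    TCset xb r C ⊆ C := by
  rintro w hw
  obtain ⟨τ, hτ, e, he, rfl⟩ := Set.mem_add.mp hw
  obtain ⟨a, ha, y, hy, hay⟩ := Set.mem_add.mp hτ
  have ha' : xb = a := (Set.mem_singleton_iff.mp ha).symm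
  subst ha'
  subst hay
  have hconv' : Convex ℝ {y : Fin n → ℝ | xb + y ∈ C} := by
    intro y1 h1 y2 h2 a b ha0 hb0 hab
    show xb + (a • y1 + b • y2) ∈ C
    have := hCconv h1 h2 ha0 hb0 hab
    convert this using 1
    funext i
    simp only [Pi.add_apply, Pi.smul_apply, smul_eq_mul]
    linear_combination (-xb i) * hab
  have hXC : xb + y ∈ C := by
    have hsub : convexHull ℝ (⋃ j ∈ N1set xb r C ∪ N2set xb r C,
        {y : Fin n → ℝ | ∃ l : ℝ, lamM xb (r j) C < (l : EReal) ∧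
          (l : EReal) < lamP xb (r j) C ∧ y = l • r j}) ⊆ {y : Fin n → ℝ | xb + y ∈ C} := by
      apply convexHull_min ?_ hconv'
      rintro z hz
      simp only [Set.mem_iUnion] at hz
      obtain ⟨j, hj, l, h1, h2, rfl⟩ := hz
      exact mem_of_between hCconv h1 h2
    exact hsub hy
  have := he (xb + y) hXC 1 zero_le_one
  simpa using this

lemma RC_subset_TC (xb : Fin n → ℝ) (r : ι → Fin n → ℝ) (C : Set (Fin n → ℝ)) :
    RCset xb r C ⊆ TCset xb r C := by
  apply Set.add_subset_add _ (Set.Subset.refl _)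
  apply Set.add_subset_add (Set.Subset.refl _)
  apply convexHull_mono
  rintro y hy
  simp only [Set.mem_iUnion] at hy ⊢
  obtain ⟨j, hj, l, hl, rfl⟩ := hy
  refine ⟨j, Or.inl hj, l, hl, ?_, rfl⟩
  have : lamP xb (r j) C = ⊤ := hj.2.2
  rw [this]
  exact EReal.coe_lt_top l

end Aux

/-- The hard inclusion: a point of `P^B ∩ C` outside `R^C` is in `cl conv (P^B ∖ C)`. -/
lemma hard_mem (xb : Fin n → ℝ) (r : ι → Fin n → ℝ) (hr : LinearIndependent ℝ r)
    (C : Set (Fin n → ℝ)) (hCopen : IsOpen C) (hCconv : Convex ℝ C)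
    (hxb : xb ∉ closure C) {x : Fin n → ℝ} (hxPB : x ∈ PBset xb r) (hxC : x ∈ C)
    (hxR : x ∉ RCset xb r C) :
    x ∈ closure (convexHull ℝ (PBset xb r \ C)) := by
  classical
  by_contra hxD
  set D := closure (convexHull ℝ (PBset xb r \ C)) with hD
  have hDconv : Convex ℝ D := (convex_convexHull ℝ _).closure
  obtain ⟨f, u, hfD, hfx⟩ := geometric_hahn_banach_closed_point hDconv isClosed_closure hxD
  have hsub : PBset xb r \ C ⊆ D := (subset_convexHull ℝ _).trans subset_closure
  have hfP : ∀ y, y ∈ PBset xb r → y ∉ C → f y < u := fun y hy hyC => hfD y (hsub ⟨hy, hyC⟩)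
  obtain ⟨c, hc, hxeq⟩ := hxPB
  have hxbPB : xb ∈ PBset xb r := ⟨fun _ => 0, fun _ => le_refl 0, by simp⟩
  have hxbC : xb ∉ C := fun h => hxb (subset_closure h)
  have hfxb : f xb < u := hfP xb hxbPB hxbC
  set γ' := u - f xb with hγ'def
  have hγ'pos : 0 < γ' := sub_pos.mpr hfxb
  set A : ι → ℝ := fun j => f (r j) with hAdef
  have hfx' : f x = f xb + ∑ j, c j * A j := by
    rw [hxeq, map_add, map_sum]
    simp [hAdef, smul_eq_mul]
  set fv := ∑ j, c j * A j with hfvdef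
  have h1 : γ' < fv := by
    have hu := hfx
    rw [hfx'] at hu
    simp only [hγ'def]
    linarith
  have tailA : ∀ (j : ι) (L : ℝ), 0 ≤ L → (∀ l : ℝ, L ≤ l → xb + l • r j ∉ C) →
      A j ≤ 0 := by
    intro j L hL htail
    by_contra hpos
    push_neg at hpos
    set l := max L (γ' / A j) with hldef
    have hl0 : 0 ≤ l := le_trans hL (le_max_left _ _)
    have hnotC := htail l (le_max_left _ _)
    have hflt := hfP _ (single_mem_PB xb r hl0 j) hnotC
    have heq : f (xb + l • r j) = f xb + l * A j := by
      rw [map_add, map_smul]; simp [hAdef, smul_eq_mul]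
    rw [heq] at hflt
    have hge : γ' ≤ l * A j := by
      have h2 : γ' / A j ≤ l := le_max_right _ _
      calc γ' = (γ' / A j) * A j := by field_simp
      _ ≤ l * A j := mul_le_mul_of_nonneg_right h2 hpos.le
    simp only [hγ'def] at hge
    linarith
  have hA0 : ∀ j, j ∉ N1set xb r C → A j ≤ 0 := by
    intro j hj
    rcases partition_cases (d := r j) hCopen hxb (hr.ne_zero j) with h0 | h1 | h2
    · exact tailA j 0 le_rfl (fun l hl => h0 l hl)
    · exact absurd h1 hj
    · obtain ⟨hm, hmt, hmp, hpt⟩ := h2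
      have hpne_top : lamP xb (r j) C ≠ ⊤ := hpt.ne
      have hpne_bot : lamP xb (r j) C ≠ ⊥ := by
        intro hb
        rw [hb] at hmp
        exact absurd (lt_trans hm hmp) (by simp)
      have hcoe : (((lamP xb (r j) C).toReal : ℝ) : EReal) = lamP xb (r j) C :=
        EReal.coe_toReal hpne_top hpne_bot
      set lp := (lamP xb (r j) C).toReal with hlp
      apply tailA j (max 0 (lp + 1)) (le_max_left _ _)
      intro l hl
      apply not_mem_of_lamP_lt (le_trans (le_max_left _ _) hl)
      rw [← hcoe]
      have hlp1 : lp + 1 ≤ l := le_trans (le_max_right _ _) hl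
      exact_mod_cast (by linarith : lp < l)
  have hN1 : ∀ j, j ∈ N1set xb r C →
      0 < (lamM xb (r j) C).toReal ∧
      (((lamM xb (r j) C).toReal : ℝ) : EReal) = lamM xb (r j) C ∧
      (lamM xb (r j) C).toReal * A j < γ' := by
    intro j hj
    obtain ⟨hm, hmt, _⟩ := hj
    have hne_top : lamM xb (r j) C ≠ ⊤ := hmt.ne
    have hne_bot : lamM xb (r j) C ≠ ⊥ := by
      intro hb
      rw [hb] at hm
      exact absurd hm (by simp)
    have hcoe : (((lamM xb (r j) C).toReal : ℝ) : EReal) = lamM xb (r j) C :=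
      EReal.coe_toReal hne_top hne_bot
    have hlmpos : 0 < (lamM xb (r j) C).toReal := by
      have h0 : (0 : EReal) < (((lamM xb (r j) C).toReal : ℝ) : EReal) := by
        rw [hcoe]; exact hm
      exact_mod_cast h0
    refine ⟨hlmpos, hcoe, ?_⟩
    have hnotC : xb + (lamM xb (r j) C).toReal • r j ∉ C :=
      lamM_boundary_not_mem hCopen hcoe.symm hlmpos
    have hflt := hfP _ (single_mem_PB xb r hlmpos.le j) hnotC
    have heq : f (xb + (lamM xb (r j) C).toReal • r j)
        = f xb + (lamM xb (r j) C).toReal * A j := by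
      rw [map_add, map_smul]; simp [hAdef, smul_eq_mul]
    rw [heq] at hflt
    simp only [hγ'def]
    linarith
  set lm : ι → ℝ := fun j => (lamM xb (r j) C).toReal with hlmdef
  set P : Finset ι := Finset.univ.filter (fun j => j ∈ N1set xb r C ∧ 0 < A j) with hPdef
  have hPmem : ∀ j ∈ P, j ∈ N1set xb r C ∧ 0 < A j := by
    intro j hj
    simpa [hPdef] using (Finset.mem_filter.mp hj).2
  set Θ := ∑ j ∈ P, c j / lm j with hΘdef
  set S := ∑ j ∈ P, c j * A j with hSdef
  have h2 : fv ≤ S := by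
    have hsplit := Finset.sum_filter_add_sum_filter_not Finset.univ
      (fun j => j ∈ N1set xb r C ∧ 0 < A j) (fun j => c j * A j)
    have hrest : ∑ j ∈ Finset.univ.filter (fun j => ¬(j ∈ N1set xb r C ∧ 0 < A j)),
        c j * A j ≤ 0 := by
      apply Finset.sum_nonpos
      intro j hj
      have hj' := (Finset.mem_filter.mp hj).2
      have hAle : A j ≤ 0 := by
        by_cases hN : j ∈ N1set xb r C
        · by_contra hA
          push_neg at hA
          exact hj' ⟨hN, hA⟩
        · exact hA0 j hN
      exact mul_nonpos_iff.mpr (Or.inl ⟨hc j, hAle⟩)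
    rw [hfvdef, hSdef, hPdef]
    rw [← hsplit]
    linarith
  have h3 : S ≤ γ' * Θ := by
    rw [hSdef, hΘdef, Finset.mul_sum]
    apply Finset.sum_le_sum
    intro j hj
    obtain ⟨hjN1, hjA⟩ := hPmem j hj
    obtain ⟨hlmpos, hcoe, hlt⟩ := hN1 j hjN1
    have hlmpos' : 0 < lm j := hlmpos
    have hnum : 0 ≤ c j * (γ' - lm j * A j) := mul_nonneg (hc j) (by linarith)
    have hdiv := div_nonneg hnum hlmpos'.le
    have heqq : γ' * (c j / lm j) - c j * A j = (c j * (γ' - lm j * A j)) / lm j := by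
      field_simp
    linarith [heqq ▸ hdiv]
  have hΘpos : 0 < Θ := by
    by_contra hΘ
    push_neg at hΘ
    have : γ' * Θ ≤ 0 := mul_nonpos_iff.mpr (Or.inl ⟨hγ'pos.le, hΘ⟩)
    linarith
  have hΘgt : 1 < Θ := by
    have hgt : γ' * 1 < γ' * Θ := by linarith
    exact lt_of_mul_lt_mul_left hgt hγ'pos.le
  have hSpos : 0 < S := by linarith
  have hfvpos : 0 < fv := by linarith
  set σ := min 1 (fv / S) with hσdef
  have hσpos : 0 < σ := lt_min one_pos (div_pos hfvpos hSpos)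
  have hσ1 : σ ≤ 1 := min_le_left _ _
  have hσS : σ * S ≤ fv := by
    have hle := min_le_right 1 (fv / S)
    calc σ * S ≤ (fv / S) * S := mul_le_mul_of_nonneg_right hle hSpos.le
    _ = fv := by field_simp
  have hσΘ : 1 < σ * Θ := by
    rcases le_total 1 (fv / S) with hcase | hcase
    · rw [hσdef, min_eq_left hcase]
      simpa using hΘgt
    · rw [hσdef, min_eq_right hcase]
      rw [div_mul_eq_mul_div, lt_div_iff₀ hSpos, one_mul]
      nlinarith
  set sfun : ι → ℝ := fun j => if j ∈ P then σ * c j else 0 with hsfundef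
  have hray : ∀ (μ : ι → ℝ), (∀ j, 0 ≤ μ j) → 0 ≤ ∑ j, μ j * A j →
      (∑ j, μ j • r j) ∈ recc C := by
    intro μ hμ hfd
    apply mem_recc_of_ray hCopen hCconv hxC
    intro t ht
    by_contra hnot
    have hmemPB : x + t • ∑ j, μ j • r j ∈ PBset xb r := by
      refine ⟨fun j => c j + t * μ j, fun j => by
        show (0:ℝ) ≤ c j + t * μ j
        nlinarith [hc j, mul_nonneg ht (hμ j)], ?_⟩
      rw [hxeq]
      funext i
      simp only [Pi.add_apply, Pi.smul_apply, Finset.sum_apply, smul_eq_mul, add_mul,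
        Finset.sum_add_distrib, Finset.mul_sum]
      ring_nf
    have hflt := hfP _ hmemPB hnot
    have heq : f (x + t • ∑ j, μ j • r j) = f x + t * ∑ j, μ j * A j := by
      rw [map_add, map_smul, map_sum]
      simp [hAdef, smul_eq_mul]
    rw [heq] at hflt
    have := mul_nonneg ht hfd
    linarith
  have hdrecc : (∑ j, (c j - sfun j) • r j) ∈ recc C := by
    apply hray
    · intro j
      by_cases hj : j ∈ P
      · simp only [hsfundef, if_pos hj]
        nlinarith [hc j]
      · simp only [hsfundef, if_neg hj]
        simpa using hc j
    · have hsumA : ∑ j, sfun j * A j = σ * S := by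
        simp only [hsfundef, ite_mul, zero_mul]
        rw [Finset.sum_ite_mem, Finset.univ_inter, hSdef, Finset.mul_sum]
        exact Finset.sum_congr rfl (fun j _ => by ring)
      have heq2 : ∑ j, (c j - sfun j) * A j = fv - σ * S := by
        simp only [sub_mul]
        rw [Finset.sum_sub_distrib, hsumA, hfvdef]
      rw [heq2]
      linarith
  have hhull : (∑ j, sfun j • r j) ∈ convexHull ℝ (⋃ j ∈ N1set xb r C,
      {y : Fin n → ℝ | ∃ l : ℝ, lamM xb (r j) C < (l : EReal) ∧ y = l • r j}) := by
    have hrw : ∑ j, sfun j • r j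
        = ∑ j ∈ P, ((c j / lm j) / Θ) • ((σ * Θ * lm j) • r j) := by
      simp only [hsfundef, ite_smul, zero_smul]
      rw [Finset.sum_ite_mem, Finset.univ_inter]
      apply Finset.sum_congr rfl
      intro j hj
      obtain ⟨hjN1, _⟩ := hPmem j hj
      have hlmpos : 0 < lm j := (hN1 j hjN1).1
      rw [smul_smul]
      congr 1
      field_simp
    rw [hrw]
    apply Convex.sum_mem (convex_convexHull ℝ _)
    · intro j hj
      obtain ⟨hjN1, _⟩ := hPmem j hj
      have hlmpos : 0 < lm j := (hN1 j hjN1).1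
      exact div_nonneg (div_nonneg (hc j) hlmpos.le) hΘpos.le
    · rw [← Finset.sum_div, ← hΘdef]
      exact div_self (ne_of_gt hΘpos)
    · intro j hj
      obtain ⟨hjN1, _⟩ := hPmem j hj
      obtain ⟨hlmpos, hcoe, _⟩ := hN1 j hjN1
      apply subset_convexHull
      refine Set.mem_biUnion hjN1 ?_
      refine ⟨σ * Θ * lm j, ?_, rfl⟩
      rw [← hcoe]
      have hlm : lm j < σ * Θ * lm j := by nlinarith
      exact_mod_cast hlm
  apply hxR
  have hxdecomp : x = (xb + ∑ j, sfun j • r j) + ∑ j, (c j - sfun j) • r j := by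
    rw [hxeq]
    funext i
    simp only [Pi.add_apply, Pi.smul_apply, Finset.sum_apply, smul_eq_mul, sub_mul,
      Finset.sum_sub_distrib]
    ring
  rw [hxdecomp]
  exact Set.add_mem_add (Set.add_mem_add (Set.mem_singleton xb) hhull) hdrecc

/-- Theorem 2. `cl conv(P^B ∖ C) = cl conv(P^B ∖ T^C) = cl conv(P^B ∖ R^C)`. -/
theorem stmt2 (xb : Fin n → ℝ) (r : ι → Fin n → ℝ) (hr : LinearIndependent ℝ r)
    (C : Set (Fin n → ℝ)) (hCopen : IsOpen C) (hCconv : Convex ℝ C)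
    (hxb : xb ∉ closure C) :
    closure (convexHull ℝ (PBset xb r \ C))
        = closure (convexHull ℝ (PBset xb r \ TCset xb r C)) ∧
      closure (convexHull ℝ (PBset xb r \ C))
        = closure (convexHull ℝ (PBset xb r \ RCset xb r C)) := by
  have hTC : TCset xb r C ⊆ C := TC_subset_C xb r hCconv
  have hRT : RCset xb r C ⊆ TCset xb r C := RC_subset_TC xb r C
  have key : PBset xb r \ RCset xb r C ⊆ closure (convexHull ℝ (PBset xb r \ C)) := by
    rintro x ⟨hxP, hxR⟩
    by_cases hxC : x ∈ C
    · exact hard_mem xb r hr C hCopen hCconv hxb hxP hxC hxR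
    · exact subset_closure (subset_convexHull ℝ _ ⟨hxP, hxC⟩)
  have h1 : closure (convexHull ℝ (PBset xb r \ C))
      ⊆ closure (convexHull ℝ (PBset xb r \ TCset xb r C)) :=
    closure_mono (convexHull_mono (Set.diff_subset_diff_right hTC))
  have h2 : closure (convexHull ℝ (PBset xb r \ TCset xb r C))
      ⊆ closure (convexHull ℝ (PBset xb r \ RCset xb r C)) :=
    closure_mono (convexHull_mono (Set.diff_subset_diff_right hRT))
  have h3 : closure (convexHull ℝ (PBset xb r \ RCset xb r C))
      ⊆ closure (convexHull ℝ (PBset xb r \ C)) :=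
    closure_minimal (convexHull_min key ((convex_convexHull ℝ _).closure)) isClosed_closure
  exact ⟨subset_antisymm h1 (h2.trans h3), subset_antisymm (h1.trans h2) h3⟩
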